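/- Every connected colored two-point graph admits an exhausting sequence of cuts. Precisely: let G be a colored graph of dimension D with n vertices whose underlying graph is connected, and with exactly two external legs, both of the same color c, one carried by a vertex v_A ∈ V₊ and the other by a vertex v_B ∈ V₋ (so every matching M_ℓ with ℓ ≠ c covers all vertices, and M_c covers all vertices except v_A and v_B). Then there exists an enumeration v₁, v₂, …, v_n of all the vertices of G with v₁ = v_A and v_n = v_B such that for every p with 1 ≤ p ≤ n − 1, both the subgraph induced by A_p = {v₁, …, v_p} (with all lines of G having both endpoints in A_p) and the subgraph induced by B_p = {v_{p+1}, …, v_n} are connected. -/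

import Mathlib

/-!
A colored graph of dimension `D` consists of two finite disjoint sets of vertices `Vp` and `Vm`
and, for each color `ℓ : Fin (D+1)`, a partial matching `M ℓ : Vp → Option Vm`, injective on
its defined values.  A vertex not covered by `M ℓ` carries an external leg of color `ℓ`.
The underlying graph has vertex set `Vp ⊕ Vm`, two vertices being adjacent when some matching
`M ℓ` matches them.  An `(A, B)`-cut of a connected two-point graph with external vertices
`v_A, v_B` is a partition of its vertices into sets `A ∋ v_A` and `B ∋ v_B` such that the
subgraphs induced by `A` and by `B` are connected; an exhausting sequence of cuts is a chain
`∅ = A₀ ⊊ A₁ ⊊ ⋯ ⊊ A_n = G` with `|A_p| = p` such that `(A_p, G ∖ A_p)` is a cut for every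
`1 ≤ p ≤ n − 1`.  We encode the exhausting sequence by an enumeration (a duplicate-free list
`L` of all vertices), `A_p` being the set of the first `p` entries of `L`.
-/

/-- `x` and `y` are joined by a line of color `ℓ` of the matching family `M`. -/
def AdjColor {D : ℕ} {Vp Vm : Type*} (M : Fin (D + 1) → Vp → Option Vm)
    (ℓ : Fin (D + 1)) (x y : Vp ⊕ Vm) : Prop :=
  (∃ v w, x = Sum.inl v ∧ y = Sum.inr w ∧ M ℓ v = some w) ∨
    (∃ v w, y = Sum.inl v ∧ x = Sum.inr w ∧ M ℓ v = some w)

/-- The underlying graph of a colored graph: two vertices are adjacent when some matching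
`M ℓ` matches them. -/
def underlyingGraph {D : ℕ} {Vp Vm : Type*} (M : Fin (D + 1) → Vp → Option Vm) :
    SimpleGraph (Vp ⊕ Vm) where
  Adj x y := ∃ ℓ, AdjColor M ℓ x y
  symm := by
    constructor
    rintro x y ⟨ℓ, h | h⟩
    · exact ⟨ℓ, Or.inr h⟩
    · exact ⟨ℓ, Or.inl h⟩
  loopless := by
    constructor
    rintro x ⟨ℓ, ⟨v, w, hx, hy, -⟩ | ⟨v, w, hx, hy, -⟩⟩ <;>
      · rw [hx] at hy; exact nomatch hy


section AuxList

lemma mem_of_getLast?_eq {α : Type*} {l : List α} {a : α} (h : l.getLast? = some a) :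
    a ∈ l := by
  obtain ⟨h', h2⟩ := List.mem_getLast?_eq_getLast (show a ∈ l.getLast? by rw [h]; rfl)
  rw [h2]
  exact List.getLast_mem h'

end AuxList


open Finset

section AuxReach

variable {V : Type*} {H : SimpleGraph V}

/-- Reachability within a finite set of vertices. -/
def Reach (H : SimpleGraph V) (S : Finset V) (x y : V) : Prop :=
  Relation.ReflTransGen (fun u v => H.Adj u v ∧ u ∈ S ∧ v ∈ S) x y

/-- Connectivity (as a vertex set) of a finite set of vertices. -/
def ConnF (H : SimpleGraph V) (S : Finset V) : Prop :=
  ∀ x ∈ S, ∀ y ∈ S, Reach H S x y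

lemma Reach.refl {S : Finset V} {x : V} : Reach H S x x := Relation.ReflTransGen.refl

lemma Reach.trans {S : Finset V} {x y z : V} (h : Reach H S x y) (h' : Reach H S y z) :
    Reach H S x z := Relation.ReflTransGen.trans h h'

lemma Reach.tail {S : Finset V} {x y z : V} (h : Reach H S x y)
    (h' : H.Adj y z ∧ y ∈ S ∧ z ∈ S) : Reach H S x z := Relation.ReflTransGen.tail h h'

lemma Reach.head {S : Finset V} {x y z : V} (h' : H.Adj x y ∧ x ∈ S ∧ y ∈ S)
    (h : Reach H S y z) : Reach H S x z := Relation.ReflTransGen.head h' h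

lemma Reach.single {S : Finset V} {x y : V} (h' : H.Adj x y ∧ x ∈ S ∧ y ∈ S) :
    Reach H S x y := Relation.ReflTransGen.single h'

lemma Reach.symm {S : Finset V} {x y : V} (h : Reach H S x y) : Reach H S y x :=
  haveI : Std.Symm (fun u v => H.Adj u v ∧ u ∈ S ∧ v ∈ S) :=
    ⟨fun _ _ hr => ⟨hr.1.symm, hr.2.2, hr.2.1⟩⟩
  (Relation.ReflTransGen.stdSymm (r := fun u v => H.Adj u v ∧ u ∈ S ∧ v ∈ S)).symm _ _ h

lemma Reach.mono {S S' : Finset V} (hSS : S ⊆ S') {x y : V} (h : Reach H S x y) :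
    Reach H S' x y :=
  Relation.ReflTransGen.mono (fun _ _ hr => ⟨hr.1, hSS hr.2.1, hSS hr.2.2⟩) _ _ h

lemma Reach.mem_of_ne {S : Finset V} {x y : V} (h : Reach H S x y) (hxy : x ≠ y) :
    x ∈ S := by
  rcases h.cases_head with rfl | ⟨c, hc, _⟩
  · exact absurd rfl hxy
  · exact hc.2.1

lemma connF_of_anchor {S : Finset V} {x₀ : V} (h : ∀ v ∈ S, Reach H S v x₀) :
    ConnF H S := fun u hu v hv => (h u hu).trans (h v hv).symm

lemma connF_singleton (x : V) : ConnF H {x} := by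
  intro u hu v hv
  simp only [Finset.mem_singleton] at hu hv
  subst hu; subst hv; exact Reach.refl

lemma connF_insert [DecidableEq V] {S : Finset V} {x y : V} (hc : ConnF H S) (hy : y ∈ S)
    (hadj : H.Adj y x) : ConnF H (insert x S) := by
  apply connF_of_anchor (x₀ := y)
  intro v hv
  rcases Finset.mem_insert.1 hv with rfl | hvS
  · exact Reach.single ⟨hadj.symm, Finset.mem_insert_self _ _, Finset.mem_insert_of_mem hy⟩
  · exact (hc v hvS y hy).mono (Finset.subset_insert _ _)

lemma cross {S P : Finset V} {z w : V} (h : Reach H S z w) (hz : z ∈ P) :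
    w ∉ P → ∃ u u', u ∈ P ∧ u ∈ S ∧ u' ∉ P ∧ u' ∈ S ∧ H.Adj u u' := by
  induction h with
  | refl => exact fun hw => absurd hz hw
  | tail h1 h2 ih =>
    intro hw
    rename_i c d
    by_cases hcP : c ∈ P
    · exact ⟨c, d, hcP, h2.2.1, hw, h2.2.2, h2.1⟩
    · exact ih hcP

lemma decomp [DecidableEq V] {S : Finset V} {x p r : V} (h : Reach H S p r) (hr : r ≠ x) :
    Reach H (S.erase x) p r ∨
      ∃ u, u ∈ S.erase x ∧ H.Adj x u ∧ Reach H (S.erase x) u r := by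
  induction h using Relation.ReflTransGen.head_induction_on with
  | refl => exact Or.inl Reach.refl
  | head hac hcb ih =>
    rename_i a cc
    rcases ih with hreach | hex
    · by_cases hax : a = x
      · by_cases hcx : cc = x
        · exact absurd hac.1 (by rw [hax, hcx]; exact H.loopless.irrefl x)
        · exact Or.inr ⟨cc, Finset.mem_erase.2 ⟨hcx, hac.2.2⟩,
            (by rw [← hax]; exact hac.1), hreach⟩
      · by_cases hcx : cc = x
        · subst hcx
          have hxmem := hreach.mem_of_ne (Ne.symm hr)
          exact absurd hxmem (Finset.notMem_erase _ _)
        · exact Or.inl (hreach.head ⟨hac.1, Finset.mem_erase.2 ⟨hax, hac.2.1⟩,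
            Finset.mem_erase.2 ⟨hcx, hac.2.2⟩⟩)
    · exact Or.inr hex

lemma decomp' [DecidableEq V] {S : Finset V} {x p r : V} (h : Reach H S p r) (hp : p ≠ x) :
    Reach H (S.erase x) p r ∨
      ∃ u, u ∈ S.erase x ∧ H.Adj u x ∧ Reach H (S.erase x) p u := by
  rcases decomp h.symm hp with h' | ⟨u, hu, hadj, hur⟩
  · exact Or.inl h'.symm
  · exact Or.inr ⟨u, hu, hadj.symm, hur.symm⟩

/-- Staying inside a "closed" set. -/
lemma reach_stay {K S : Finset V} (hcl : ∀ u ∈ K, ∀ z, H.Adj u z → z ∈ S → z ∈ K)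
    {u z : V} (h : Reach H S u z) (hu : u ∈ K) : z ∈ K ∧ Reach H K u z := by
  induction h with
  | refl => exact ⟨hu, Reach.refl⟩
  | tail h1 h2 ih =>
    obtain ⟨hcK, hreach⟩ := ih
    have hzK := hcl _ hcK _ h2.1 h2.2.2
    exact ⟨hzK, hreach.tail ⟨h2.1, hcK, hzK⟩⟩

/-- Avoiding the set of non-`t`-reachers. -/
lemma reach_avoid [DecidableEq V] {K S : Finset V} {t : V}
    (hT : ∀ q ∈ S, Reach H S q t → q ∉ K) {p : V} (h : Reach H S p t) :
    Reach H (S \ K) p t := by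
  induction h using Relation.ReflTransGen.head_induction_on with
  | refl => exact Reach.refl
  | head hac hcb ih =>
    rename_i a cc
    have haS : a ∈ S := hac.2.1
    have hcS : cc ∈ S := hac.2.2
    have haK : a ∉ K := hT a haS (Reach.head hac hcb)
    have hcK : cc ∉ K := hT cc hcS hcb
    exact ih.head ⟨hac.1, Finset.mem_sdiff.2 ⟨haS, haK⟩, Finset.mem_sdiff.2 ⟨hcS, hcK⟩⟩

end AuxReach

section AuxBig

variable {V : Type*} {H : SimpleGraph V}

/-- Key lemma: one can remove a vertex adjacent to the outside `A`, distinct from `t`,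
keeping the set connected. -/
lemma ex_removable [Fintype V] [DecidableEq V]
    (htc : ∀ v x y, x ≠ v → y ≠ v → Reach H (Finset.univ.erase v) x y)
    (A : Finset V) :
    ∀ (k : ℕ) (B : Finset V) (t : V), B.card ≤ k → t ∈ B → 2 ≤ B.card →
      ConnF H B → (∀ u ∈ B, u ≠ t → ∀ z, H.Adj u z → z ∈ B ∨ z ∈ A) →
      (∃ x ∈ B, x ≠ t ∧ ∃ y ∈ A, H.Adj x y) →
      ∃ x ∈ B, x ≠ t ∧ (∃ y ∈ A, H.Adj x y) ∧ ConnF H (B.erase x) := by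
  intro k
  induction k with
  | zero =>
    intro B t hk _ h2 _ _ _
    omega
  | succ k ih =>
    intro B t hBk htB h2B hconnB hnbd hex
    classical
    obtain ⟨x, hxB, hxt, hxA⟩ := hex
    by_cases hcx : ConnF H (B.erase x)
    · exact ⟨x, hxB, hxt, hxA, hcx⟩
    · have htx : t ≠ x := Ne.symm hxt
      have htBe : t ∈ B.erase x := Finset.mem_erase.2 ⟨htx, htB⟩
      set K := (B.erase x).filter (fun u => ¬ Reach H (B.erase x) u t) with hKdef
      have hKmem : ∀ {u}, u ∈ K ↔ u ∈ B.erase x ∧ ¬ Reach H (B.erase x) u t := by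
        intro u; simp [hKdef]
      have hKne : K.Nonempty := by
        by_contra hKe
        apply hcx
        apply connF_of_anchor (x₀ := t)
        intro v hv
        by_contra hvr
        exact hKe ⟨v, hKmem.2 ⟨hv, hvr⟩⟩
      have htK : t ∉ K := fun h => (hKmem.1 h).2 Reach.refl
      have hxK : x ∉ K := fun h => (Finset.notMem_erase x B) (hKmem.1 h).1
      -- closure of K under adjacency inside B.erase x
      have hclose : ∀ u ∈ K, ∀ z, H.Adj u z → z ∈ B.erase x → z ∈ K := by
        intro u hu z hadj hz
        obtain ⟨hu1, hu2⟩ := hKmem.1 hu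
        exact hKmem.2 ⟨hz, fun hr => hu2 (Reach.head ⟨hadj, hu1, hz⟩ hr)⟩
      -- B' := insert x K
      set B' := insert x K with hB'def
      have hB'B : B' ⊆ B := by
        intro u hu
        rcases Finset.mem_insert.1 hu with rfl | huK
        · exact hxB
        · exact Finset.mem_of_mem_erase (hKmem.1 huK).1
      have htB' : t ∉ B' := by
        intro h
        rcases Finset.mem_insert.1 h with h' | h'
        · exact htx h'
        · exact htK h'
      -- connectivity of B'
      have hconnB' : ConnF H B' := by
        apply connF_of_anchor (x₀ := x)
        intro u hu
        rcases Finset.mem_insert.1 hu with rfl | huK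
        · exact Reach.refl
        · obtain ⟨huE, hur⟩ := hKmem.1 huK
          have hut : u ≠ x := (Finset.mem_erase.1 huE).1
          rcases decomp' (hconnB u (Finset.mem_of_mem_erase huE) t htB) hut with hre | hex2
          · exact absurd hre hur
          · obtain ⟨w, hwE, hwadj, huw⟩ := hex2
            obtain ⟨hwK, hrKuw⟩ := reach_stay hclose huw huK
            exact (hrKuw.mono (Finset.subset_insert _ _)).tail
              ⟨hwadj, Finset.mem_insert_of_mem hwK, Finset.mem_insert_self _ _⟩
      -- a vertex of K adjacent to A
      obtain ⟨u₀, hu₀K⟩ := hKne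
      have hu₀x : u₀ ≠ x := (Finset.mem_erase.1 (hKmem.1 hu₀K).1).1
      obtain ⟨w, w', hwK, hwS, hw'K, hw'S, hww'⟩ :=
        cross (P := K) (htc x u₀ t hu₀x htx) hu₀K htK
      have hwx : w ≠ x := (Finset.mem_erase.1 hwS).1
      have hw'x : w' ≠ x := (Finset.mem_erase.1 hw'S).1
      have hwB : w ∈ B := hB'B (Finset.mem_insert_of_mem hwK)
      have hwt : w ≠ t := fun h => htK (h ▸ hwK)
      have hw'B : w' ∉ B := by
        intro h
        exact hw'K (hclose w hwK w' hww' (Finset.mem_erase.2 ⟨hw'x, h⟩))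
      have hw'A : w' ∈ A := by
        rcases hnbd w hwB hwt w' hww' with h | h
        · exact absurd h hw'B
        · exact h
      -- cardinalities
      have hB'card : B'.card ≤ k := by
        have h1 : B' ⊆ B.erase t := by
          intro u hu
          exact Finset.mem_erase.2 ⟨fun h => htB' (h ▸ hu), hB'B hu⟩
        have := Finset.card_le_card h1
        rw [Finset.card_erase_of_mem htB] at this
        omega
      have h2B' : 2 ≤ B'.card := by
        rw [hB'def, Finset.card_insert_of_notMem hxK]
        have := Finset.card_pos.2 ⟨u₀, hu₀K⟩
        omega
      -- neighbourhood condition for B'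
      have hnbd' : ∀ u ∈ B', u ≠ x → ∀ z, H.Adj u z → z ∈ B' ∨ z ∈ A := by
        intro u hu hux z hadj
        have huK : u ∈ K := by
          rcases Finset.mem_insert.1 hu with h | h
          · exact absurd h hux
          · exact h
        by_cases hzB : z ∈ B
        · by_cases hzx : z = x
          · exact Or.inl (hzx ▸ Finset.mem_insert_self _ _)
          · exact Or.inl (Finset.mem_insert_of_mem
              (hclose u huK z hadj (Finset.mem_erase.2 ⟨hzx, hzB⟩)))
        · have hut : u ≠ t := fun h => htK (h ▸ huK)
          rcases hnbd u (hB'B hu) hut z hadj with h | h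
          · exact absurd h hzB
          · exact Or.inr h
      -- recursive call
      obtain ⟨x', hx'B', hx'x, hx'A, hconn'⟩ :=
        ih B' x hB'card (Finset.mem_insert_self _ _) h2B' hconnB' hnbd'
          ⟨w, Finset.mem_insert_of_mem hwK, fun h => hxK (h ▸ hwK), w', hw'A, hww'⟩
      have hx'K : x' ∈ K := by
        rcases Finset.mem_insert.1 hx'B' with h | h
        · exact absurd h hx'x
        · exact h
      have hx'B : x' ∈ B := hB'B hx'B'
      have hx't : x' ≠ t := fun h => htK (h ▸ hx'K)
      refine ⟨x', hx'B, hx't, hx'A, ?_⟩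
      -- reassemble connectivity of B.erase x'
      have hxx' : x ≠ x' := Ne.symm hx'x
      have hxBe : x ∈ B.erase x' := Finset.mem_erase.2 ⟨hxx', hxB⟩
      have hTfun : ∀ q ∈ B.erase x, Reach H (B.erase x) q t → q ∉ K :=
        fun q _ hr hq => (hKmem.1 hq).2 hr
      have hsub : (B.erase x) \ K ⊆ B.erase x' := by
        intro z hz
        obtain ⟨hz1, hz2⟩ := Finset.mem_sdiff.1 hz
        exact Finset.mem_erase.2 ⟨fun h => hz2 (h ▸ hx'K), Finset.mem_of_mem_erase hz1⟩
      -- t reaches x within B.erase x'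
      have htx' : t ≠ x' := fun h => htK (h ▸ hx'K)
      have htreach : Reach H (B.erase x') t x := by
        rcases decomp (hconnB x hxB t htB) htx with hre | hex2
        · exact absurd (hre.mem_of_ne (Ne.symm htx)) (Finset.notMem_erase _ _)
        · obtain ⟨u₂, hu₂E, hu₂adj, hu₂r⟩ := hex2
          have hu₂K : u₂ ∉ K := hTfun u₂ hu₂E hu₂r
          have h3 : Reach H (B.erase x') u₂ t := (reach_avoid hTfun hu₂r).mono hsub
          exact h3.symm.tail ⟨hu₂adj.symm,
            Finset.mem_erase.2 ⟨fun h => hu₂K (h ▸ hx'K), Finset.mem_of_mem_erase hu₂E⟩, hxBe⟩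
      apply connF_of_anchor (x₀ := x)
      intro v hv
      obtain ⟨hvx', hvB⟩ := Finset.mem_erase.1 hv
      by_cases hvB' : v ∈ B'
      · have : Reach H (B'.erase x') v x :=
          hconn' v (Finset.mem_erase.2 ⟨hvx', hvB'⟩) x (Finset.mem_erase.2 ⟨hxx',
            Finset.mem_insert_self _ _⟩)
        refine this.mono ?_
        intro z hz
        obtain ⟨hz1, hz2⟩ := Finset.mem_erase.1 hz
        exact Finset.mem_erase.2 ⟨hz1, hB'B hz2⟩
      · have hvx : v ≠ x := fun h => hvB' (h ▸ Finset.mem_insert_self _ _)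
        have hvK : v ∉ K := fun h => hvB' (Finset.mem_insert_of_mem h)
        have hvE : v ∈ B.erase x := Finset.mem_erase.2 ⟨hvx, hvB⟩
        have hvr : Reach H (B.erase x) v t := by
          by_contra h
          exact hvK (hKmem.2 ⟨hvE, h⟩)
        exact ((reach_avoid hTfun hvr).mono hsub).trans htreach

end AuxBig

section AuxBuild

variable {V : Type*} {H : SimpleGraph V}

/-- Building the exhausting enumeration of the complement of `A`. -/
lemma build_list [Fintype V] [DecidableEq V] {a b : V} (hab : a ≠ b)
    (htc : ∀ v x y, x ≠ v → y ≠ v → Reach H (Finset.univ.erase v) x y) :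
    ∀ (k : ℕ) (A : Finset V), a ∈ A → b ∉ A → ConnF H A → ConnF H Aᶜ → Aᶜ.card ≤ k →
    ∃ l : List V, l.Nodup ∧ l.toFinset = Aᶜ ∧ l.getLast? = some b ∧
      ∀ j < l.length, ConnF H (A ∪ (l.take j).toFinset) ∧ ConnF H ((l.drop j).toFinset) := by
  intro k
  induction k with
  | zero =>
    intro A haA hbA _ _ hk
    have : b ∈ Aᶜ := Finset.mem_compl.2 hbA
    have := Finset.card_pos.2 ⟨b, this⟩
    omega
  | succ k ih =>
    intro A haA hbA hcA hcAc hk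
    have hbAc : b ∈ Aᶜ := Finset.mem_compl.2 hbA
    by_cases h1 : Aᶜ.card = 1
    · have hAc : Aᶜ = {b} := by
        obtain ⟨z, hz⟩ := Finset.card_eq_one.1 h1
        rw [hz] at hbAc ⊢
        rw [(Finset.mem_singleton.1 hbAc).symm]
      refine ⟨[b], by simp, by simp [hAc], by simp, ?_⟩
      intro j hj
      simp only [List.length_singleton] at hj
      interval_cases j
      constructor
      · simpa using hcA
      · simpa using connF_singleton (H := H) b
    · have h2 : 2 ≤ Aᶜ.card := by
        have := Finset.card_pos.2 ⟨b, hbAc⟩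
        omega
    -- initial vertex adjacent to A
      have hzex : ∃ z ∈ Aᶜ, z ≠ b := by
        by_contra hcon
        push_neg at hcon
        have : Aᶜ ⊆ {b} := fun z hz => Finset.mem_singleton.2 (hcon z hz)
        have := Finset.card_le_card this
        simp at this
        omega
      obtain ⟨z, hzA, hzb⟩ := hzex
      obtain ⟨u, u', huP, huS, hu'P, _, huu'⟩ :=
        cross (P := Aᶜ) (htc b z a hzb hab) hzA (Finset.notMem_compl.2 haA)
      have hub : u ≠ b := (Finset.mem_erase.1 huS).1
      have hu'A : u' ∈ A := by
        by_contra h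
        exact hu'P (Finset.mem_compl.2 h)
      obtain ⟨x, hxAc, hxb, ⟨y, hyA, hxy⟩, hcErase⟩ :=
        ex_removable htc A Aᶜ.card Aᶜ b le_rfl hbAc h2 hcAc
          (fun v _ _ w _ => by
            by_cases hw : w ∈ A
            · exact Or.inr hw
            · exact Or.inl (Finset.mem_compl.2 hw))
          ⟨u, huP, hub, u', hu'A, huu'⟩
      -- recurse with A' = insert x A
      have hA'c : (insert x A)ᶜ = Aᶜ.erase x := by
        ext w
        simp only [Finset.mem_compl, Finset.mem_insert, Finset.mem_erase]
        tauto
      have hcA' : ConnF H (insert x A) := connF_insert hcA hyA hxy.symm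
      have hbA' : b ∉ insert x A := by
        intro h
        rcases Finset.mem_insert.1 h with h' | h'
        · exact hxb h'.symm
        · exact hbA h'
      have hcard : (insert x A)ᶜ.card ≤ k := by
        rw [hA'c, Finset.card_erase_of_mem hxAc]
        omega
      obtain ⟨l, hnd, hfin, hlast, hconnl⟩ :=
        ih (insert x A) (Finset.mem_insert_of_mem haA) hbA' hcA'
          (by rw [hA'c]; exact hcErase) hcard
      have hxl : x ∉ l := by
        intro h
        have := List.mem_toFinset.2 h
        rw [hfin, hA'c] at this
        exact (Finset.notMem_erase _ _) this
      have hlne : l ≠ [] := by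
        intro h
        have : b ∈ l.toFinset := by
          rw [hfin, hA'c]
          exact Finset.mem_erase.2 ⟨fun hh => hxb hh.symm, hbAc⟩
        rw [h] at this
        simp at this
      refine ⟨x :: l, List.nodup_cons.2 ⟨hxl, hnd⟩, ?_, ?_, ?_⟩
      · rw [List.toFinset_cons, hfin, hA'c, Finset.insert_erase hxAc]
      · rcases l with _ | ⟨y', l'⟩
        · exact absurd rfl hlne
        · rw [List.getLast?_cons_cons]
          exact hlast
      · intro j hj
        cases j with
        | zero =>
          constructor
          · simpa using hcA
          · have : ((x :: l).drop 0).toFinset = Aᶜ := by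
              rw [List.drop_zero, List.toFinset_cons, hfin, hA'c, Finset.insert_erase hxAc]
            rw [this]; exact hcAc
        | succ j =>
          simp only [List.length_cons, Nat.succ_lt_succ_iff] at hj
          obtain ⟨hc1, hc2⟩ := hconnl j hj
          constructor
          · have heq : A ∪ ((x :: l).take (j+1)).toFinset
                = insert x A ∪ (l.take j).toFinset := by
              rw [List.take_succ_cons, List.toFinset_cons]
              ext w
              simp only [Finset.mem_union, Finset.mem_insert]
              tauto
            rw [heq]; exact hc1
          · rw [List.drop_succ_cons]; exact hc2

end AuxBuild

section AuxTwoConn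

variable {V : Type*} {H : SimpleGraph V}

lemma avoid_walk [Fintype V] [DecidableEq V]
    (hnb : ∀ v x q, H.Adj v x → H.Adj v q → Reach H (Finset.univ.erase v) x q) (v : V) :
    ∀ (n : ℕ) (x y : V), x ≠ v → y ≠ v → ∀ (w : H.Walk x y), w.length ≤ n →
      Reach H (Finset.univ.erase v) x y := by
  intro n
  induction n with
  | zero =>
    intro x y hx hy w hw
    cases w with
    | nil => exact Reach.refl
    | cons h p => simp [SimpleGraph.Walk.length_cons] at hw
  | succ n ihn =>
    intro x y hx hy w hw
    cases w with
    | nil => exact Reach.refl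
    | @cons _ z _ h p =>
      by_cases hz : z = v
      · subst hz
        cases p with
        | nil => exact absurd rfl hy
        | @cons _ q _ h2 p2 =>
          have hq : q ≠ z := fun hh => (H.loopless.irrefl z) (hh ▸ h2)
          have r1 := hnb z x q h.symm h2
          have r2 : Reach H (Finset.univ.erase z) q y := by
            apply ihn q y hq hy p2
            simp only [SimpleGraph.Walk.length_cons] at hw
            omega
          exact r1.trans r2
      · have r1 : Reach H (Finset.univ.erase v) x z :=
          Reach.single ⟨h, Finset.mem_erase.2 ⟨hx, Finset.mem_univ _⟩,
            Finset.mem_erase.2 ⟨hz, Finset.mem_univ _⟩⟩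
        refine r1.trans (ihn z y hz hy p ?_)
        simp only [SimpleGraph.Walk.length_cons] at hw
        omega

lemma twoconn [Fintype V] [DecidableEq V] (hco : H.Connected)
    (hnb : ∀ v x q, H.Adj v x → H.Adj v q → Reach H (Finset.univ.erase v) x q) :
    ∀ v x y, x ≠ v → y ≠ v → Reach H (Finset.univ.erase v) x y := by
  intro v x y hx hy
  obtain ⟨w⟩ := hco.preconnected x y
  exact avoid_walk hnb v w.length x y hx hy w le_rfl

end AuxTwoConn

section AuxGen

variable {V : Type*} {H : SimpleGraph V}

lemma gen_cycle [Fintype V] [DecidableEq V] {α β : Type*} [Fintype α]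
    (ia : α → V) (ib : β → V) (hia : Function.Injective ia)
    (hne : ∀ (p : α) (q : β), ia p ≠ ib q)
    (f g : α ≃ β)
    (hf : ∀ p, H.Adj (ia p) (ib (f p)))
    (hg : ∀ p, H.Adj (ia p) (ib (g p)))
    (u : α) : Reach H (Finset.univ.erase (ia u)) (ib (f u)) (ib (g u)) := by
  classical
  set π : Equiv.Perm α := f.trans g.symm with hπ
  have key : ∀ (i j : ℕ), i < j → (π ^ i) u = (π ^ j) u → (π ^ (j - i)) u = u := by
    intro i j hlt hEq
    have h1 : (π ^ i) ((π ^ (j - i)) u) = (π ^ i) u := by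
      rw [← Equiv.Perm.mul_apply, ← pow_add]
      rw [show i + (j - i) = j by omega]
      exact hEq.symm
    exact (π ^ i).injective h1
  have hper : ∃ m, 0 < m ∧ (π ^ m) u = u := by
    have hninj : ¬ Function.Injective (fun n : Fin (Fintype.card α + 1) => (π ^ (n : ℕ)) u) := by
      intro hinj
      have := Fintype.card_le_of_injective _ hinj
      simp at this
    obtain ⟨i, j, hij, hne'⟩ := Function.not_injective_iff.1 hninj
    rcases Nat.lt_or_ge (i : ℕ) (j : ℕ) with hlt | hge
    · exact ⟨(j : ℕ) - i, by omega, key i j hlt hij⟩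
    · have hlt : (j : ℕ) < i := by
        rcases Nat.lt_or_ge (j : ℕ) (i : ℕ) with h | h
        · exact h
        · exact absurd (Fin.ext (by omega)) hne'
      exact ⟨(i : ℕ) - j, by omega, key j i hlt hij.symm⟩
  set m := Nat.find hper with hmdef
  obtain ⟨hmpos, hmu⟩ := Nat.find_spec hper
  have hmin : ∀ kk, 0 < kk → kk < m → (π ^ kk) u ≠ u :=
    fun kk hk hkm h => Nat.find_min hper hkm ⟨hk, h⟩
  have chain : ∀ kk, kk < m →
      Reach H (Finset.univ.erase (ia u)) (ib (f u)) (ib (f ((π ^ kk) u))) := by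
    intro kk
    induction kk with
    | zero => intro _; simp only [pow_zero, Equiv.Perm.coe_one, id_eq]; exact Reach.refl
    | succ kk ihk =>
      intro hk1
      have hk : kk < m := Nat.lt_of_succ_lt hk1
      have prev := ihk hk
      have hw' : (π ^ (kk + 1)) u = π ((π ^ kk) u) := by
        rw [pow_succ']
        rfl
      have hgw : g (π ((π ^ kk) u)) = f ((π ^ kk) u) := by
        simp [hπ]
      have hne1 : ia ((π ^ (kk + 1)) u) ≠ ia u := fun h =>
        hmin (kk + 1) (Nat.succ_pos _) hk1 (hia h)
      have hmem1 : ia ((π ^ (kk + 1)) u) ∈ Finset.univ.erase (ia u) :=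
        Finset.mem_erase.2 ⟨hne1, Finset.mem_univ _⟩
      have hmemf : ∀ q : β, ib q ∈ Finset.univ.erase (ia u) :=
        fun q => Finset.mem_erase.2 ⟨fun h => (hne u q) h.symm, Finset.mem_univ _⟩
      have step1 : H.Adj (ib (f ((π ^ kk) u))) (ia ((π ^ (kk + 1)) u)) := by
        have := hg ((π ^ (kk + 1)) u)
        rw [hw', hgw] at this
        rw [hw']
        exact this.symm
      have step2 : H.Adj (ia ((π ^ (kk + 1)) u)) (ib (f ((π ^ (kk + 1)) u))) :=
        hf _
      exact (prev.tail ⟨step1, hmemf _, hmem1⟩).tail ⟨step2, hmem1, hmemf _⟩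
  have hm1 : m - 1 < m := by omega
  have hc := chain (m - 1) hm1
  have hfg : f ((π ^ (m - 1)) u) = g u := by
    have h1 : π ((π ^ (m - 1)) u) = u := by
      rw [← Equiv.Perm.mul_apply, ← pow_succ']
      rw [show m - 1 + 1 = m by omega]
      exact hmu
    have h2 : g.symm (f ((π ^ (m - 1)) u)) = u := by
      rw [← Equiv.trans_apply, ← hπ]
      exact h1
    exact (Equiv.symm_apply_eq g).1 h2
  rw [hfg] at hc
  exact hc

end AuxGen

section AuxInduce

variable {V : Type*}

lemma connF_induce {G H : SimpleGraph V} {S : Finset V}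
    (hGH : ∀ u v, u ∈ S → v ∈ S → H.Adj u v → G.Adj u v)
    (hc : ConnF H S) (hne : S.Nonempty) : (G.induce (S : Set V)).Connected := by
  have hkey : ∀ (x : V) (hx : x ∈ S) (z : V), Reach H S x z → ∀ hz : z ∈ (S : Set V),
      (G.induce (S : Set V)).Reachable ⟨x, hx⟩ ⟨z, hz⟩ := by
    intro x hx z hrz
    induction hrz with
    | refl => intro hz; exact SimpleGraph.Reachable.refl _
    | tail h1 h2 ih =>
      intro hz
      refine (ih h2.2.1).trans ?_
      apply SimpleGraph.Adj.reachable
      exact hGH _ _ h2.2.1 h2.2.2 h2.1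
  rw [SimpleGraph.connected_iff]
  constructor
  · rintro ⟨x, hx⟩ ⟨y, hy⟩
    exact hkey x hx y (hc x hx y hy) hy
  · exact ⟨⟨hne.choose, hne.choose_spec⟩⟩

end AuxInduce

/-- every connected colored two-point graph admits an exhausting sequence of
cuts.  If the underlying graph of a colored graph of dimension `D` is connected and the graph
has exactly two external legs, both of color `c`, carried by `v_A ∈ V₊` and `v_B ∈ V₋`, then
there is an enumeration `v₁, …, v_n` of all the vertices (a duplicate-free list `L` containing
every vertex) starting at `v_A` and ending at `v_B` such that for every `1 ≤ p ≤ n - 1` both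
the subgraph induced by `A_p = {v₁, …, v_p}` and the subgraph induced by its complement
`B_p = {v_{p+1}, …, v_n}` are connected. -/
theorem exists_exhausting_sequence_of_cuts (D : ℕ) (hD : 1 ≤ D)
    (Vp Vm : Type*) [Fintype Vp] [Fintype Vm]
    (M : Fin (D + 1) → Vp → Option Vm)
    (hinj : ∀ ℓ v v' w, M ℓ v = some w → M ℓ v' = some w → v = v')
    (hconn : (underlyingGraph M).Connected)
    (c : Fin (D + 1)) (vA : Vp) (vB : Vm)
    -- `v_A` carries an external leg of color `c` :
    (hA : M c vA = none)
    -- `v_B` carries an external leg of color `c` :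
    (hB : ∀ v, M c v ≠ some vB)
    -- these are the only external legs: every matching `M ℓ` with `ℓ ≠ c` covers all vertices
    -- and `M c` covers all vertices except `v_A` and `v_B` :
    (honly₁ : ∀ ℓ v, M ℓ v = none → ℓ = c ∧ v = vA)
    (honly₂ : ∀ ℓ w, (∀ v, M ℓ v ≠ some w) → ℓ = c ∧ w = vB) :
    ∃ L : List (Vp ⊕ Vm), L.Nodup ∧ (∀ x, x ∈ L) ∧
      L.head? = some (Sum.inl vA) ∧ L.getLast? = some (Sum.inr vB) ∧
      ∀ p, 1 ≤ p → p ≤ L.length - 1 →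
        ((underlyingGraph M).induce {x | x ∈ L.take p}).Connected ∧
        ((underlyingGraph M).induce {x | x ∈ L.drop p}).Connected := by
  classical
  set G := underlyingGraph M with hGdef
  set N : Fin (D + 1) → Vp → Vm := fun ℓ v => (M ℓ v).getD vB with hNdef
  have hNM : ∀ ℓ v w, M ℓ v = some w → N ℓ v = w := by
    intro ℓ v w h; simp [hNdef, h]
  have hNA : N c vA = vB := by simp [hNdef, hA]
  have hbij : ∀ ℓ, Function.Bijective (N ℓ) := by
    intro ℓ
    constructor
    · intro v v' h
      rcases hMv : M ℓ v with _ | w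
      · obtain ⟨hc1, hv1⟩ := honly₁ ℓ v hMv
        rcases hMv' : M ℓ v' with _ | w'
        · obtain ⟨_, hv2⟩ := honly₁ ℓ v' hMv'
          rw [hv1, hv2]
        · exfalso
          have h1 : N ℓ v = vB := by simp [hNdef, hMv]
          have h2 : N ℓ v' = w' := hNM _ _ _ hMv'
          rw [h1, h2] at h
          apply hB v'
          rw [← hc1, hMv', ← h]
      · rcases hMv' : M ℓ v' with _ | w'
        · exfalso
          obtain ⟨hc1, hv1⟩ := honly₁ ℓ v' hMv'
          have h1 : N ℓ v' = vB := by simp [hNdef, hMv']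
          have h2 : N ℓ v = w := hNM _ _ _ hMv
          rw [h1, h2] at h
          apply hB v
          rw [← hc1, hMv, h]
        · have h1 : N ℓ v = w := hNM _ _ _ hMv
          have h2 : N ℓ v' = w' := hNM _ _ _ hMv'
          rw [h1] at h; rw [h2] at h
          exact hinj ℓ v v' w hMv (by rw [hMv', ← h])
    · intro w
      by_cases hw : ∃ v, M ℓ v = some w
      · obtain ⟨v, hv⟩ := hw
        exact ⟨v, hNM _ _ _ hv⟩
      · push_neg at hw
        obtain ⟨hc1, hw1⟩ := honly₂ ℓ w hw
        exact ⟨vA, by rw [hc1, hw1]; exact hNA⟩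
  set e : Fin (D + 1) → Vp ≃ Vm := fun ℓ => Equiv.ofBijective (N ℓ) (hbij ℓ) with hedef
  have he : ∀ ℓ v, e ℓ v = N ℓ v := fun ℓ v => rfl
  set H := underlyingGraph (fun ℓ v => some (N ℓ v)) with hHdef
  have hGH : ∀ x y, G.Adj x y → H.Adj x y := by
    rintro x y ⟨ℓ, ⟨v, w, hx, hy, hw⟩ | ⟨v, w, hx, hy, hw⟩⟩
    · exact ⟨ℓ, Or.inl ⟨v, w, hx, hy, by simp [hNM ℓ v w hw]⟩⟩
    · exact ⟨ℓ, Or.inr ⟨v, w, hx, hy, by simp [hNM ℓ v w hw]⟩⟩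
  have hHG : ∀ x y, H.Adj x y → G.Adj x y ∨
      (x = Sum.inl vA ∧ y = Sum.inr vB) ∨ (x = Sum.inr vB ∧ y = Sum.inl vA) := by
    rintro x y ⟨ℓ, ⟨v, w, hx, hy, hw⟩ | ⟨v, w, hy, hx, hw⟩⟩
    · have hw' : N ℓ v = w := Option.some_injective _ hw
      rcases hMv : M ℓ v with _ | w''
      · obtain ⟨hc1, hv1⟩ := honly₁ ℓ v hMv
        have : w = vB := by rw [← hw', ← hNA, hc1, hv1]
        exact Or.inr (Or.inl ⟨by rw [hx, hv1], by rw [hy, this]⟩)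
      · have : w'' = w := by rw [← hw', hNM ℓ v w'' hMv]
        exact Or.inl ⟨ℓ, Or.inl ⟨v, w, hx, hy, by rw [hMv, this]⟩⟩
    · have hw' : N ℓ v = w := Option.some_injective _ hw
      rcases hMv : M ℓ v with _ | w''
      · obtain ⟨hc1, hv1⟩ := honly₁ ℓ v hMv
        have : w = vB := by rw [← hw', ← hNA, hc1, hv1]
        exact Or.inr (Or.inr ⟨by rw [hx, this], by rw [hy, hv1]⟩)
      · have : w'' = w := by rw [← hw', hNM ℓ v w'' hMv]
        exact Or.inl ⟨ℓ, Or.inr ⟨v, w, hy, hx, by rw [hMv, this]⟩⟩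
  have hle : G ≤ H := by
    intro x y h
    exact hGH x y h
  have hconnH : H.Connected := hconn.mono hle
  have hadj1 : ∀ ℓ (p : Vp), H.Adj (Sum.inl p) (Sum.inr (N ℓ p)) :=
    fun ℓ p => ⟨ℓ, Or.inl ⟨p, N ℓ p, rfl, rfl, rfl⟩⟩
  have hext1 : ∀ (u : Vp) (y : Vp ⊕ Vm), H.Adj (Sum.inl u) y → ∃ ℓ, y = Sum.inr (N ℓ u) := by
    rintro u y ⟨ℓ, ⟨v, w, hx, hy, hw⟩ | ⟨v, w, hy, hx, hw⟩⟩
    · have : v = u := Sum.inl_injective hx.symm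
      exact ⟨ℓ, by rw [hy, ← Option.some_injective _ hw, this]⟩
    · exact absurd hx (by simp)
  have hext2 : ∀ (w : Vm) (y : Vp ⊕ Vm), H.Adj (Sum.inr w) y →
      ∃ ℓ p, y = Sum.inl p ∧ N ℓ p = w := by
    rintro w y ⟨ℓ, ⟨v, w', hx, hy, hw⟩ | ⟨v, w', hy, hx, hw⟩⟩
    · exact absurd hx (by simp)
    · have hww : w' = w := Sum.inr_injective hx.symm
      exact ⟨ℓ, v, hy, by rw [← hww, Option.some_injective _ hw]⟩
  have hnb : ∀ v x q, H.Adj v x → H.Adj v q →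
      Reach H (Finset.univ.erase v) x q := by
    intro v x q hvx hvq
    cases v with
    | inl u =>
      obtain ⟨ℓ, rfl⟩ := hext1 u x hvx
      obtain ⟨ℓ', rfl⟩ := hext1 u q hvq
      exact gen_cycle (H := H) Sum.inl Sum.inr Sum.inl_injective
        (fun p q => by simp) (e ℓ) (e ℓ') (fun p => hadj1 ℓ p) (fun p => hadj1 ℓ' p) u
    | inr w =>
      obtain ⟨ℓ, p, rfl, hp⟩ := hext2 w x hvx
      obtain ⟨ℓ', p', rfl, hp'⟩ := hext2 w q hvq
      have hpe : p = (e ℓ).symm w := by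
        rw [← hp]
        exact ((e ℓ).symm_apply_apply p).symm
      have hpe' : p' = (e ℓ').symm w := by
        rw [← hp']
        exact ((e ℓ').symm_apply_apply p').symm
      have hf : ∀ z : Vm, H.Adj (Sum.inr z) (Sum.inl ((e ℓ).symm z)) := by
        intro z
        have h0 := hadj1 ℓ ((e ℓ).symm z)
        have h1 : N ℓ ((e ℓ).symm z) = z := (e ℓ).apply_symm_apply z
        rw [h1] at h0
        exact h0.symm
      have hg : ∀ z : Vm, H.Adj (Sum.inr z) (Sum.inl ((e ℓ').symm z)) := by
        intro z
        have h0 := hadj1 ℓ' ((e ℓ').symm z)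
        have h1 : N ℓ' ((e ℓ').symm z) = z := (e ℓ').apply_symm_apply z
        rw [h1] at h0
        exact h0.symm
      rw [hpe, hpe']
      exact gen_cycle (H := H) Sum.inr Sum.inl Sum.inr_injective
        (fun p q => by simp) (e ℓ).symm (e ℓ').symm hf hg w
  have htc := twoconn hconnH hnb
  set a : Vp ⊕ Vm := Sum.inl vA with hadef
  set b : Vp ⊕ Vm := Sum.inr vB with hbdef
  have hab : a ≠ b := by simp [hadef, hbdef]
  have hcA1 : ConnF H {a} := connF_singleton a
  have hsub1 : Finset.univ.erase a ⊆ ({a} : Finset (Vp ⊕ Vm))ᶜ := by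
    intro z hz
    exact Finset.mem_compl.2 (by simpa using (Finset.mem_erase.1 hz).1)
  have hcAc1 : ConnF H ({a} : Finset (Vp ⊕ Vm))ᶜ := by
    intro x hx y hy
    have hx' : x ≠ a := by simpa using Finset.mem_compl.1 hx
    have hy' : y ≠ a := by simpa using Finset.mem_compl.1 hy
    exact (htc a x y hx' hy').mono hsub1
  obtain ⟨l, hnd, hfin, hlast, hconnl⟩ :=
    build_list hab htc (({a} : Finset (Vp ⊕ Vm))ᶜ.card) {a} (Finset.mem_singleton_self a)
      (by simpa using hab.symm) hcA1 hcAc1 le_rfl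
  have hal : a ∉ l := by
    intro h
    have := List.mem_toFinset.2 h
    rw [hfin] at this
    exact (Finset.mem_compl.1 this) (Finset.mem_singleton_self a)
  have hbl : b ∈ l := by
    rw [← List.mem_toFinset, hfin]
    exact Finset.mem_compl.2 (by simpa using hab.symm)
  have hlnil : l ≠ [] := by
    intro h; rw [h] at hbl; simp at hbl
  refine ⟨a :: l, List.nodup_cons.2 ⟨hal, hnd⟩, ?_, rfl, ?_, ?_⟩
  · intro x
    by_cases hx : x = a
    · exact hx ▸ List.mem_cons_self
    · refine List.mem_cons_of_mem _ ?_
      rw [← List.mem_toFinset, hfin]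
      exact Finset.mem_compl.2 (by simpa using hx)
  · rcases l with _ | ⟨y', l'⟩
    · exact absurd rfl hlnil
    · rw [List.getLast?_cons_cons]
      exact hlast
  · intro p hp1 hp2
    obtain ⟨j, rfl⟩ : ∃ j, p = j + 1 := ⟨p - 1, by omega⟩
    have hjl : j < l.length := by
      simp only [List.length_cons] at hp2
      omega
    obtain ⟨hc1, hc2⟩ := hconnl j hjl
    have hlast_drop : (l.drop j).getLast? = some b := by
      rw [List.getLast?_drop, if_neg (by omega)]
      exact hlast
    have hbdrop : b ∈ l.drop j := mem_of_getLast?_eq hlast_drop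
    have hbtake : b ∉ l.take j := by
      intro hb
      have hnd2 : (l.take j ++ l.drop j).Nodup := by
        rw [List.take_append_drop]; exact hnd
      exact ((List.nodup_append).1 hnd2).2.2 b hb b hbdrop rfl
    constructor
    · have hset1 : {x | x ∈ (a :: l).take (j + 1)} =
          ((({a} : Finset (Vp ⊕ Vm)) ∪ (l.take j).toFinset : Finset (Vp ⊕ Vm)) : Set (Vp ⊕ Vm)) := by
        ext x
        simp [List.take_succ_cons]
      rw [hset1]
      have hbS : b ∉ ({a} : Finset (Vp ⊕ Vm)) ∪ (l.take j).toFinset := by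
        intro h
        rcases Finset.mem_union.1 h with h' | h'
        · exact hab ((Finset.mem_singleton.1 h').symm)
        · exact hbtake (List.mem_toFinset.1 h')
      apply connF_induce (H := H)
      · intro u v hu hv huv
        rcases hHG u v huv with h | ⟨rfl, rfl⟩ | ⟨rfl, rfl⟩
        · exact h
        · exact absurd hv hbS
        · exact absurd hu hbS
      · exact hc1
      · exact ⟨a, Finset.mem_union_left _ (Finset.mem_singleton_self a)⟩
    · have hset2 : {x | x ∈ (a :: l).drop (j + 1)} =
          (((l.drop j).toFinset : Finset (Vp ⊕ Vm)) : Set (Vp ⊕ Vm)) := by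
        ext x
        simp [List.drop_succ_cons]
      rw [hset2]
      have haS : a ∉ (l.drop j).toFinset := by
        intro h
        exact hal (List.drop_subset j l (List.mem_toFinset.1 h))
      apply connF_induce (H := H)
      · intro u v hu hv huv
        rcases hHG u v huv with h | ⟨rfl, rfl⟩ | ⟨rfl, rfl⟩
        · exact h
        · exact absurd hu haS
        · exact absurd hv haS
      · exact hc2
      · exact ⟨b, List.mem_toFinset.2 hbdrop⟩
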